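/- If S_W is symmetric positive definite and S_B symmetric positive semidefinite, then the ratio trace problem max_{V} Tr((VᵀS_W V)⁻¹(VᵀS_B V)) over full-rank V ∈ ℝ^{n×m} is solved by taking the columns of V to be eigenvectors of S_W⁻¹S_B associated with its m largest eigenvalues, and the optimal value equals the sum of the m largest eigenvalues of S_W⁻¹S_B. -/

import Mathlib

open Matrix

section helpers
variable {n m : ℕ}

lemma conj_submatrix (W S : Matrix (Fin n) (Fin n) ℝ) (f : Fin m → Fin n) :
    (W.submatrix id f)ᵀ * S * (W.submatrix id f) = (Wᵀ * S * W).submatrix f f := by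
  ext i j
  simp [Matrix.mul_apply, Finset.mul_sum, Finset.sum_mul]

lemma mul_diag_submatrix (W : Matrix (Fin n) (Fin n) ℝ) (μ : Fin n → ℝ) (f : Fin m → Fin n) :
    (W * Matrix.diagonal μ).submatrix id f
      = W.submatrix id f * Matrix.diagonal (fun i => μ (f i)) := by
  ext i j
  simp [Matrix.mul_apply, Matrix.diagonal, Matrix.submatrix, mul_ite, Finset.sum_ite_eq']

lemma isUnit_of_rank_eq (A : Matrix (Fin m) (Fin m) ℝ) (h : A.rank = m) : IsUnit A := by
  rw [← Matrix.mulVec_surjective_iff_isUnit]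
  have hr : LinearMap.range A.mulVecLin = ⊤ := by
    apply Submodule.eq_top_of_finrank_eq
    rw [← Matrix.rank, h]
    simp [Module.finrank_pi]
  intro v
  obtain ⟨x, hx⟩ := LinearMap.range_eq_top.mp hr v
  exact ⟨x, hx⟩

lemma diag_proj_bounds (B : Matrix (Fin n) (Fin n) ℝ) (hsym : Bᵀ = B)
    (hidem : B * B = B) (i : Fin n) : 0 ≤ B i i ∧ B i i ≤ 1 := by
  have hsym' : ∀ a b, B a b = B b a := fun a b => by
    conv_lhs => rw [← hsym]
    exact Matrix.transpose_apply _ _ _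
  have h : B i i = ∑ k, (B i k) ^ 2 := by
    conv_lhs => rw [← hidem]
    rw [Matrix.mul_apply]
    exact Finset.sum_congr rfl fun k _ => by rw [hsym' k i]; ring
  have h0 : 0 ≤ B i i := by rw [h]; positivity
  have h2 : (B i i) ^ 2 ≤ B i i := by
    conv_rhs => rw [h]
    exact Finset.single_le_sum (f := fun k => (B i k) ^ 2) (fun k _ => sq_nonneg _)
      (Finset.mem_univ i)
  exact ⟨h0, by nlinarith⟩

lemma trace_diagonal_mul (μ : Fin n → ℝ) (B : Matrix (Fin n) (Fin n) ℝ) :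
    (Matrix.diagonal μ * B).trace = ∑ i, μ i * B i i := by
  simp [Matrix.trace, Matrix.diag, Matrix.mul_apply, Matrix.diagonal_apply, ite_mul,
    Finset.sum_ite_eq]

lemma sum_mul_le_top (hm : 1 ≤ m) (hmn : m ≤ n) (μ p : Fin n → ℝ)
    (hp0 : ∀ i, 0 ≤ p i) (hp1 : ∀ i, p i ≤ 1) (hsum : ∑ i, p i = m)
    (hsort : ∀ i j : Fin n, i ≤ j → μ j ≤ μ i) :
    ∑ i, μ i * p i ≤ ∑ i : Fin m, μ (Fin.castLE hmn i) := by
  have hmpos : m - 1 < n := by omega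
  set c : ℝ := μ ⟨m - 1, hmpos⟩ with hc
  set s : Finset (Fin n) := Finset.univ.filter (fun i => i.val < m) with hsdef
  have hs : s = Finset.univ.map (Fin.castLEEmb hmn) := by
    ext i
    simp only [hsdef, Finset.mem_filter, Finset.mem_univ, true_and, Finset.mem_map]
    constructor
    · intro h
      exact ⟨⟨i.val, h⟩, Fin.ext rfl⟩
    · rintro ⟨j, rfl⟩; exact j.isLt
  have hcard : (s.card : ℝ) = m := by rw [hs]; simp
  have hμsum : ∑ i ∈ s, μ i = ∑ i : Fin m, μ (Fin.castLE hmn i) := by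
    rw [hs, Finset.sum_map]; rfl
  have h1 : ∀ i ∈ s, μ i * p i ≤ μ i + c * (p i - 1) := by
    intro i hi
    have hiv : i.val < m := by simpa [hsdef] using hi
    have hle : c ≤ μ i := hsort i ⟨m - 1, hmpos⟩ (by simp [Fin.le_def]; omega)
    nlinarith [hp1 i]
  have h2 : ∀ i ∈ Finset.univ.filter (fun i : Fin n => ¬ i.val < m), μ i * p i ≤ c * p i := by
    intro i hi
    have hiv : ¬ i.val < m := by simpa using hi
    have hle : μ i ≤ c := hsort ⟨m - 1, hmpos⟩ i (by simp [Fin.le_def]; omega)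
    nlinarith [hp0 i]
  have split : ∑ i ∈ s, μ i * p i
        + ∑ i ∈ Finset.univ.filter (fun i : Fin n => ¬ i.val < m), μ i * p i
      = ∑ i, μ i * p i :=
    Finset.sum_filter_add_sum_filter_not Finset.univ (fun i : Fin n => i.val < m) _
  have splitp : ∑ i ∈ s, p i
        + ∑ i ∈ Finset.univ.filter (fun i : Fin n => ¬ i.val < m), p i
      = ∑ i, p i :=
    Finset.sum_filter_add_sum_filter_not Finset.univ (fun i : Fin n => i.val < m) _
  have A1 : ∑ i ∈ s, μ i * p i ≤ ∑ i ∈ s, (μ i + c * (p i - 1)) := Finset.sum_le_sum h1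
  have A2 : ∑ i ∈ Finset.univ.filter (fun i : Fin n => ¬ i.val < m), μ i * p i
      ≤ ∑ i ∈ Finset.univ.filter (fun i : Fin n => ¬ i.val < m), c * p i := Finset.sum_le_sum h2
  have B1 : ∑ i ∈ s, (μ i + c * (p i - 1))
      = ∑ i ∈ s, μ i + (c * (∑ i ∈ s, p i) - c * m) := by
    simp only [Finset.sum_add_distrib, mul_sub, mul_one, Finset.sum_sub_distrib,
      ← Finset.mul_sum, Finset.sum_const, nsmul_eq_mul]
    rw [mul_comm (s.card : ℝ) c, hcard]
  have B2 : ∑ i ∈ Finset.univ.filter (fun i : Fin n => ¬ i.val < m), c * p i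
      = c * ∑ i ∈ Finset.univ.filter (fun i : Fin n => ¬ i.val < m), p i :=
    (Finset.mul_sum _ _ _).symm
  have hPsum : (∑ i ∈ s, p i)
      + (∑ i ∈ Finset.univ.filter (fun i : Fin n => ¬ i.val < m), p i) = (m : ℝ) := by
    rw [splitp, hsum]
  have hP : c * (∑ i ∈ s, p i)
      + c * (∑ i ∈ Finset.univ.filter (fun i : Fin n => ¬ i.val < m), p i) = c * m := by
    rw [← mul_add, hPsum]
  rw [← hμsum, ← split]
  linarith

end helpers

/-- The ratio trace problem `max_V Tr((VᵀS_WV)⁻¹(VᵀS_BV))` over full-rank `V ∈ ℝ^{n×m}`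
is solved by the eigenvectors of `S_W⁻¹S_B` for its `m` largest eigenvalues, with optimal
value the sum of the `m` largest eigenvalues. Here `(W, μ)` is a simultaneous
diagonalization: `WᵀS_WW = I`, `WᵀS_BW = diag(μ)` with `μ` sorted decreasingly. -/
theorem ratioTrace_solution {n m : ℕ} (hm : 1 ≤ m) (hmn : m ≤ n)
    (SB SW : Matrix (Fin n) (Fin n) ℝ) (hSW : SW.PosDef) (hSB : SB.PosSemidef)
    (W : Matrix (Fin n) (Fin n) ℝ) (μ : Fin n → ℝ)
    (hW1 : Wᵀ * SW * W = 1) (hW2 : Wᵀ * SB * W = Matrix.diagonal μ)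
    (hsort : ∀ i j : Fin n, i ≤ j → μ j ≤ μ i) :
    IsGreatest
      {t : ℝ | ∃ V : Matrix (Fin n) (Fin m) ℝ, V.rank = m ∧
        t = ((Vᵀ * SW * V)⁻¹ * (Vᵀ * SB * V)).trace}
      (∑ i : Fin m, μ (Fin.castLE hmn i)) ∧
    ((W.submatrix id (Fin.castLE hmn)).rank = m ∧
      SW⁻¹ * SB * W.submatrix id (Fin.castLE hmn)
        = W.submatrix id (Fin.castLE hmn) *
            Matrix.diagonal (fun i : Fin m => μ (Fin.castLE hmn i)) ∧
      (((W.submatrix id (Fin.castLE hmn))ᵀ * SW * W.submatrix id (Fin.castLE hmn))⁻¹ *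
          ((W.submatrix id (Fin.castLE hmn))ᵀ * SB * W.submatrix id (Fin.castLE hmn))).trace
        = ∑ i : Fin m, μ (Fin.castLE hmn i)) := by
  have hWdet : IsUnit W.det := by
    have h := congrArg Matrix.det hW1
    rw [Matrix.det_mul, Matrix.det_mul, Matrix.det_one, Matrix.det_transpose] at h
    exact IsUnit.of_mul_eq_one (SW.det * W.det) (by rw [← mul_assoc]; exact h)
  -- V₀ computations
  have hVSW : (W.submatrix id (Fin.castLE hmn))ᵀ * SW * (W.submatrix id (Fin.castLE hmn)) = 1 := by
    rw [conj_submatrix, hW1, Matrix.submatrix_one _ (Fin.castLE_injective hmn)]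
  have hVSB : (W.submatrix id (Fin.castLE hmn))ᵀ * SB * (W.submatrix id (Fin.castLE hmn))
      = Matrix.diagonal (fun i : Fin m => μ (Fin.castLE hmn i)) := by
    rw [conj_submatrix, hW2, Matrix.submatrix_diagonal _ _ (Fin.castLE_injective hmn)]
    rfl
  have hrank : (W.submatrix id (Fin.castLE hmn)).rank = m := by
    apply le_antisymm
    · simpa using (W.submatrix id (Fin.castLE hmn)).rank_le_card_width
    · have h := Matrix.rank_mul_le_right ((W.submatrix id (Fin.castLE hmn))ᵀ * SW)
        (W.submatrix id (Fin.castLE hmn))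
      rw [hVSW, Matrix.rank_one] at h
      simpa using h
  have htrace0 : (((W.submatrix id (Fin.castLE hmn))ᵀ * SW * W.submatrix id (Fin.castLE hmn))⁻¹ *
          ((W.submatrix id (Fin.castLE hmn))ᵀ * SB * W.submatrix id (Fin.castLE hmn))).trace
        = ∑ i : Fin m, μ (Fin.castLE hmn i) := by
    rw [hVSW, hVSB, inv_one, one_mul, Matrix.trace_diagonal]
  have hSWinv : SW⁻¹ = W * Wᵀ := by
    apply Matrix.inv_eq_left_inv
    have h2 : W * (Wᵀ * SW) = 1 := mul_eq_one_comm.mp hW1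
    rw [Matrix.mul_assoc, h2]
  have heig : SW⁻¹ * SB * W.submatrix id (Fin.castLE hmn)
      = W.submatrix id (Fin.castLE hmn) *
          Matrix.diagonal (fun i : Fin m => μ (Fin.castLE hmn i)) := by
    rw [hSWinv]
    have h1 : W * Wᵀ * SB * W.submatrix id (Fin.castLE hmn)
        = (W * Wᵀ * SB * W).submatrix id (Fin.castLE hmn) := rfl
    have h2 : W * Wᵀ * SB * W = W * Matrix.diagonal μ := by
      rw [Matrix.mul_assoc W Wᵀ SB, Matrix.mul_assoc, hW2]
    rw [h1, h2, mul_diag_submatrix]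
  refine ⟨⟨⟨W.submatrix id (Fin.castLE hmn), hrank, htrace0.symm⟩, ?_⟩, hrank, heig, htrace0⟩
  -- upper bound
  rintro t ⟨V, hVrank, rfl⟩
  have hWinvdet : IsUnit (W⁻¹).det := by
    rw [Matrix.det_nonsing_inv]
    exact isUnit_ringInverse.mpr hWdet
  obtain ⟨U, hUdef⟩ : ∃ U : Matrix (Fin n) (Fin m) ℝ, U = W⁻¹ * V := ⟨_, rfl⟩
  have hV : V = W * U := by
    rw [hUdef, ← Matrix.mul_assoc, Matrix.mul_nonsing_inv _ hWdet, Matrix.one_mul]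
  have hUrank : U.rank = m := by
    rw [hUdef, Matrix.rank_mul_eq_right_of_isUnit_det _ _ hWinvdet, hVrank]
  obtain ⟨A, hAdef⟩ : ∃ A : Matrix (Fin m) (Fin m) ℝ, A = Uᵀ * U := ⟨_, rfl⟩
  have hArank : A.rank = m := by rw [hAdef, Matrix.rank_transpose_mul_self, hUrank]
  have hAunit : IsUnit A := isUnit_of_rank_eq A hArank
  have hAdet : IsUnit A.det := (Matrix.isUnit_iff_isUnit_det A).mp hAunit
  have hAsym : Aᵀ = A := by rw [hAdef, Matrix.transpose_mul, Matrix.transpose_transpose]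
  have hVSWV : Vᵀ * SW * V = A := by
    have e : Vᵀ * SW * V = Uᵀ * (Wᵀ * SW * W) * U := by
      rw [hV, Matrix.transpose_mul]
      simp only [Matrix.mul_assoc]
    rw [e, hW1, Matrix.mul_one, hAdef]
  have hVSBV : Vᵀ * SB * V = Uᵀ * Matrix.diagonal μ * U := by
    have e : Vᵀ * SB * V = Uᵀ * (Wᵀ * SB * W) * U := by
      rw [hV, Matrix.transpose_mul]
      simp only [Matrix.mul_assoc]
    rw [e, hW2]
  obtain ⟨B, hBdef⟩ : ∃ B : Matrix (Fin n) (Fin n) ℝ, B = U * A⁻¹ * Uᵀ := ⟨_, rfl⟩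
  have hBsym : Bᵀ = B := by
    rw [hBdef]
    simp only [Matrix.transpose_mul, Matrix.transpose_transpose,
      Matrix.transpose_nonsing_inv, hAsym, Matrix.mul_assoc]
  have hBidem : B * B = B := by
    rw [hBdef]
    have e : U * A⁻¹ * Uᵀ * (U * A⁻¹ * Uᵀ) = U * (A⁻¹ * ((Uᵀ * U) * (A⁻¹ * Uᵀ))) := by
      simp only [Matrix.mul_assoc]
    rw [e, ← hAdef, ← Matrix.mul_assoc A⁻¹ A, Matrix.nonsing_inv_mul A hAdet, Matrix.one_mul,
      Matrix.mul_assoc]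
  have htraceB : ∑ i, B i i = (m : ℝ) := by
    have e1 : ∑ i, B i i = B.trace := by simp [Matrix.trace, Matrix.diag]
    have e2 : B.trace = (A⁻¹ * A).trace := by
      rw [hBdef, Matrix.trace_mul_comm (U * A⁻¹) Uᵀ, ← Matrix.mul_assoc Uᵀ U A⁻¹, ← hAdef,
        Matrix.trace_mul_comm]
    rw [e1, e2, Matrix.nonsing_inv_mul A hAdet, Matrix.trace_one]
    simp
  have hdiag := fun i => diag_proj_bounds B hBsym hBidem i
  have htrace_eq : ((Vᵀ * SW * V)⁻¹ * (Vᵀ * SB * V)).trace = ∑ i, μ i * B i i := by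
    rw [hVSWV, hVSBV, ← trace_diagonal_mul μ B, hBdef]
    rw [show A⁻¹ * (Uᵀ * Matrix.diagonal μ * U) = (A⁻¹ * Uᵀ * Matrix.diagonal μ) * U from by
      simp only [Matrix.mul_assoc]]
    rw [Matrix.trace_mul_comm]
    rw [show U * (A⁻¹ * Uᵀ * Matrix.diagonal μ) = (U * A⁻¹ * Uᵀ) * Matrix.diagonal μ from by
      simp only [Matrix.mul_assoc]]
    rw [Matrix.trace_mul_comm]
  rw [htrace_eq]
  exact sum_mul_le_top hm hmn μ (fun i => B i i) (fun i => (hdiag i).1) (fun i => (hdiag i).2)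
    htraceB hsort
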